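/- Let (A,d) be a compact metric space. Suppose F : A × A × A → A and φ : A → A satisfy the equations of Σ₁: F(φᵏ(x), x, y) = x for every integer k ≥ 1 and all x, y ∈ A, and F(x,x,y) = y for all x, y ∈ A (φᵏ denoting the k-fold iterate of φ). Then max(χ(F), χ(φ)) ≥ diam(A)/2; that is, μ(A, Σ₁) ≥ diam(A)/2. -/

import Mathlib

open scoped ENNReal

/-- The jump of `f` at `b`: the infimum, over open neighborhoods `U` of `b`,
of the diameter (in `[0,∞]`) of `f '' U`. -/
noncomputable def jumpAt {B A : Type*} [TopologicalSpace B] [PseudoEMetricSpace A]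
    (f : B → A) (b : B) : ℝ≥0∞ :=
  ⨅ (U : Set B) (_ : IsOpen U) (_ : b ∈ U), EMetric.diam (f '' U)

/-- The jump of `f`: the supremum over all points of the jump of `f` there. -/
noncomputable def jump {B A : Type*} [TopologicalSpace B] [PseudoEMetricSpace A]
    (f : B → A) : ℝ≥0∞ :=
  ⨆ b, jumpAt f b

/-- For a compact metric space `A`, any operations `F : A³ → A` and `φ : A → A`
satisfying the equations `Σ₁` (`F(φᵏ(x),x,y) = x` for `k ≥ 1`, and `F(x,x,y) = y`)
must have `max(χ(F), χ(φ)) ≥ diam(A)/2`. -/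
theorem jump_ge_half_diam_of_sigma1 {A : Type*} [MetricSpace A] [CompactSpace A]
    (F : A × A × A → A) (φ : A → A)
    (h1 : ∀ k : ℕ, 1 ≤ k → ∀ x y : A, F (φ^[k] x, x, y) = x)
    (h2 : ∀ x y : A, F (x, x, y) = y) :
    EMetric.diam (Set.univ : Set A) / 2 ≤ max (jump F) (jump φ) := by
  rcases isEmpty_or_nonempty A with hA | ⟨⟨x0⟩⟩
  · simp [Set.univ_eq_empty_iff.2 hA, EMetric.diam]
  rcases eq_or_ne (jump F) ⊤ with hF | hF
  · simp [hF]
  have key : ∀ ε : ℝ≥0∞, 0 < ε → ε ≠ ⊤ →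
      EMetric.diam (Set.univ : Set A) ≤ 2 * jump F + ε := by
    intro ε hε hεt
    have hε2 : (0 : ℝ≥0∞) < ε / 2 := ENNReal.div_pos hε.ne' (by norm_num)
    have hnb : ∀ t : A × A × A, ∃ U, IsOpen U ∧ t ∈ U ∧
        EMetric.diam (F '' U) < jump F + ε / 2 := by
      intro t
      have h : jumpAt F t < jump F + ε / 2 :=
        lt_of_le_of_lt (le_iSup (jumpAt F) t) (ENNReal.lt_add_right hF hε2.ne')
      simp only [jumpAt, iInf_lt_iff] at h
      obtain ⟨U, hU, htU, hd⟩ := h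
      exact ⟨U, hU, htU, hd⟩
    choose U hUopen htU hdiam using hnb
    obtain ⟨δ, hδ, hball⟩ := lebesgue_number_lemma_of_metric
      (isCompact_univ : IsCompact (Set.univ : Set (A × A × A))) hUopen
      (fun t _ => Set.mem_iUnion.2 ⟨t, htU t⟩)
    -- recurrence for φ
    set u : ℕ → A := fun n => φ^[n + 1] x0 with hu
    obtain ⟨a, -, ψ, hψ, hconv⟩ := isCompact_univ.tendsto_subseq
      (fun n => Set.mem_univ (u n))
    obtain ⟨N, hN⟩ := Metric.tendsto_atTop.mp hconv (δ / 2) (by positivity)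
    set k := ψ N + 1 with hk
    set l := ψ (N + 1) + 1 with hl
    have hkl : k < l := by
      have h : ψ N < ψ (N + 1) := hψ (by omega); omega
    have hdist : dist (φ^[k] x0) (φ^[l] x0) < δ := by
      have h1' := hN N le_rfl
      have h2' := hN (N + 1) (Nat.le_succ N)
      have : dist (u (ψ N)) (u (ψ (N + 1))) < δ := by
        calc dist (u (ψ N)) (u (ψ (N + 1)))
            ≤ dist (u (ψ N)) a + dist (u (ψ (N + 1))) a := dist_triangle_right _ _ _
          _ < δ / 2 + δ / 2 := add_lt_add h1' h2'
          _ = δ := by ring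
      simpa [hu, hk, hl] using this
    set w := φ^[k] x0 with hw
    set m := l - k with hm
    have hm1 : 1 ≤ m := by omega
    have hiter : φ^[m] w = φ^[l] x0 := by
      rw [hw, ← Function.iterate_add_apply]
      congr 1; omega
    -- for every y, edist w y is small
    have hclose : ∀ y : A, edist w y ≤ jump F + ε / 2 := by
      intro y
      obtain ⟨t, ht⟩ := hball (w, w, y) (Set.mem_univ _)
      have hp2 : (w, w, y) ∈ U t := ht (Metric.mem_ball_self hδ)
      have hp1 : (φ^[m] w, w, y) ∈ U t := by
        apply ht
        simp only [Metric.mem_ball, Prod.dist_eq, dist_self]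
        have : dist (φ^[m] w) w < δ := by rw [hiter]; simpa [dist_comm] using hdist
        exact max_lt this hδ
      have : edist (F (φ^[m] w, w, y)) (F (w, w, y)) ≤ EMetric.diam (F '' U t) :=
        EMetric.edist_le_diam_of_mem (Set.mem_image_of_mem F hp1)
          (Set.mem_image_of_mem F hp2)
      rw [h1 m hm1 w y, h2 w y] at this
      exact this.trans (hdiam t).le
    apply EMetric.diam_le
    intro y1 _ y2 _
    calc edist y1 y2 ≤ edist y1 w + edist w y2 := edist_triangle _ _ _
      _ = edist w y1 + edist w y2 := by rw [edist_comm]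
      _ ≤ (jump F + ε / 2) + (jump F + ε / 2) := add_le_add (hclose y1) (hclose y2)
      _ = 2 * jump F + ε := by rw [two_mul, add_add_add_comm, ENNReal.add_halves]
  have hD : EMetric.diam (Set.univ : Set A) ≤ 2 * jump F := by
    refine ENNReal.le_of_forall_pos_le_add fun ε hε h2F => ?_
    exact key ε (by exact_mod_cast hε) (by simp)
  have : EMetric.diam (Set.univ : Set A) / 2 ≤ jump F := by
    rw [ENNReal.div_le_iff_le_mul (Or.inl two_ne_zero) (Or.inl ENNReal.ofNat_ne_top)]
    rwa [mul_comm] at hD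
  exact this.trans (le_max_left _ _)
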